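/- Let K be a real 2×2 matrix with det K < 0, and let J_B be a complex structure on (ℝ², Δ). Then J_A = −K J_B K⁻¹ is a complex structure on (ℝ², Δ) satisfying the anticommutation relation K J_B + J_A K = 0; in particular, every nondegenerate single-mode Gaussian channel with negative det K is gauge-contravariant. -/

import Mathlib

open Matrix

/-- The single-mode symplectic matrix `Δ = [[0,1],[-1,0]]`. -/
def Sympl1 : Matrix (Fin 2) (Fin 2) ℝ := !![0, 1; -1, 0]

/-- A real 2×2 matrix `J` is a complex structure with respect to `Δ` if
`J² = -I`, `ΔJ = -JᵀΔ`, and `ΔJ` is positive semidefinite. -/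
def IsComplexStructure1 (J : Matrix (Fin 2) (Fin 2) ℝ) : Prop :=
  J * J = -1 ∧ Sympl1 * J = -(Jᵀ * Sympl1) ∧ (Sympl1 * J).PosSemidef

lemma psd_smul {n : ℕ} (M : Matrix (Fin n) (Fin n) ℝ) (hM : M.PosSemidef)
    {c : ℝ} (hc : 0 ≤ c) : (c • M).PosSemidef := by
  refine ⟨?_, fun x => ?_⟩
  · unfold Matrix.IsHermitian
    rw [Matrix.conjTranspose_smul, hM.1.eq]
    simp
  · have := hM.2 x
    have h := mul_nonneg hc this
    simp only [Matrix.smul_apply, smul_eq_mul, star_trivial, Finsupp.mul_sum] at h ⊢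
    ring_nf at h ⊢
    exact h

lemma sympl_conj (K : Matrix (Fin 2) (Fin 2) ℝ) :
    Kᵀ * Sympl1 * K = K.det • Sympl1 := by
  ext i j
  fin_cases i <;> fin_cases j <;>
    simp [Sympl1, Matrix.mul_apply, Matrix.det_fin_two, Fin.sum_univ_succ] <;> ring

/-- If `K` is a real 2×2 matrix with `det K < 0` and `J_B` is a
complex structure on `(ℝ², Δ)`, then `J_A = -K J_B K⁻¹` is a complex structure
satisfying the anticommutation relation `K J_B + J_A K = 0`; that is, every
nondegenerate single-mode Gaussian channel with negative `det K` is
gauge-contravariant. -/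
theorem neg_conj_complexStructure_of_det_neg (K J_B : Matrix (Fin 2) (Fin 2) ℝ)
    (hK : K.det < 0) (hJB : IsComplexStructure1 J_B) :
    IsComplexStructure1 (-(K * J_B * K⁻¹)) ∧
    K * J_B + (-(K * J_B * K⁻¹)) * K = 0 := by
  obtain ⟨h1, h2, h3⟩ := hJB
  have hdet : K.det ≠ 0 := ne_of_lt hK
  have hinv : K * K⁻¹ = 1 := Matrix.mul_nonsing_inv K (isUnit_iff_ne_zero.mpr hdet)
  have hinv' : K⁻¹ * K = 1 := Matrix.nonsing_inv_mul K (isUnit_iff_ne_zero.mpr hdet)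
  -- Δ K = det K • (K⁻¹)ᵀ Δ
  have hΔK : Sympl1 * K = K.det • ((K⁻¹)ᵀ * Sympl1) := by
    have := sympl_conj K
    calc Sympl1 * K = (K⁻¹)ᵀ * Kᵀ * Sympl1 * K := by
          rw [← Matrix.transpose_mul, hinv, Matrix.transpose_one, Matrix.one_mul]
      _ = (K⁻¹)ᵀ * (Kᵀ * Sympl1 * K) := by noncomm_ring
      _ = K.det • ((K⁻¹)ᵀ * Sympl1) := by rw [this, Matrix.mul_smul]
  -- Kᵀ Δ = det K • Δ K⁻¹
  have hKΔ : Kᵀ * Sympl1 = K.det • (Sympl1 * K⁻¹) := by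
    have := sympl_conj K
    calc Kᵀ * Sympl1 = Kᵀ * Sympl1 * K * K⁻¹ := by
          rw [Matrix.mul_assoc, hinv, Matrix.mul_one]
      _ = K.det • (Sympl1 * K⁻¹) := by rw [this, Matrix.smul_mul]
  have key : Sympl1 * (-(K * J_B * K⁻¹)) = (-K.det) • ((K⁻¹)ᵀ * (Sympl1 * J_B) * K⁻¹) := by
    calc Sympl1 * (-(K * J_B * K⁻¹)) = -((Sympl1 * K) * J_B * K⁻¹) := by noncomm_ring
      _ = -((K.det • ((K⁻¹)ᵀ * Sympl1)) * J_B * K⁻¹) := by rw [hΔK]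
      _ = (-K.det) • ((K⁻¹)ᵀ * (Sympl1 * J_B) * K⁻¹) := by
          simp [Matrix.smul_mul, Matrix.mul_assoc]
  refine ⟨⟨?_, ?_, ?_⟩, ?_⟩
  · calc (-(K * J_B * K⁻¹)) * (-(K * J_B * K⁻¹)) = K * J_B * (K⁻¹ * K) * J_B * K⁻¹ := by
          noncomm_ring
      _ = K * (J_B * J_B) * K⁻¹ := by rw [hinv']; noncomm_ring
      _ = -1 := by rw [h1]; simp [hinv]
  · rw [key]
    have : (-(K * J_B * K⁻¹))ᵀ * Sympl1 = -((K⁻¹)ᵀ * (J_Bᵀ * (Kᵀ * Sympl1))) := by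
      simp [Matrix.transpose_mul, Matrix.mul_assoc]
    rw [this, hKΔ]
    have hJ : J_Bᵀ * Sympl1 = -(Sympl1 * J_B) := by
      rw [h2]; simp
    simp only [Matrix.mul_smul, smul_smul]
    rw [← Matrix.mul_assoc J_Bᵀ Sympl1 K⁻¹, hJ]
    simp [Matrix.mul_smul, Matrix.neg_mul, Matrix.mul_neg, neg_smul, Matrix.mul_assoc]
  · rw [key]
    have hpsd : ((K⁻¹)ᵀ * (Sympl1 * J_B) * K⁻¹).PosSemidef := by
      have := h3.conjTranspose_mul_mul_same K⁻¹
      simpa using this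
    exact psd_smul _ hpsd (by linarith : (0:ℝ) ≤ -K.det)
  · calc K * J_B + (-(K * J_B * K⁻¹)) * K = K * J_B - K * J_B * (K⁻¹ * K) := by noncomm_ring
      _ = 0 := by rw [hinv']; noncomm_ring
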